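/- Let L be a pomset language over a finite alphabet Σ. Then L is series-rational (i.e., L = ⟦e⟧ for some sr-expression e) if and only if L = L_A(q) for some finite, fork-acyclic pomset automaton A and state q of A. -/

import Mathlib

namespace WBKA

/-- Series-parallel terms over an alphabet `A`. -/
inductive SPTerm (A : Type) : Type
  | one : SPTerm A
  | atom : A → SPTerm A
  | seq : SPTerm A → SPTerm A → SPTerm A
  | par : SPTerm A → SPTerm A → SPTerm A

/-- The congruence generated by the series-parallel pomset axioms:
associativity of both compositions, commutativity of parallel composition,
and the empty pomset acting as unit for both. -/
inductive SPEquiv {A : Type} : SPTerm A → SPTerm A → Prop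
  | refl (u : SPTerm A) : SPEquiv u u
  | symm {u v : SPTerm A} : SPEquiv u v → SPEquiv v u
  | trans {u v w : SPTerm A} : SPEquiv u v → SPEquiv v w → SPEquiv u w
  | seqCongr {u u' v v' : SPTerm A} :
      SPEquiv u u' → SPEquiv v v' → SPEquiv (u.seq v) (u'.seq v')
  | parCongr {u u' v v' : SPTerm A} :
      SPEquiv u u' → SPEquiv v v' → SPEquiv (u.par v) (u'.par v')
  | seqAssoc (u v w : SPTerm A) : SPEquiv ((u.seq v).seq w) (u.seq (v.seq w))
  | parAssoc (u v w : SPTerm A) : SPEquiv ((u.par v).par w) (u.par (v.par w))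
  | parComm (u v : SPTerm A) : SPEquiv (u.par v) (v.par u)
  | seqOneLeft (u : SPTerm A) : SPEquiv (SPTerm.one.seq u) u
  | seqOneRight (u : SPTerm A) : SPEquiv (u.seq SPTerm.one) u
  | parOne (u : SPTerm A) : SPEquiv (u.par SPTerm.one) u

instance spSetoid (A : Type) : Setoid (SPTerm A) :=
  ⟨SPEquiv, SPEquiv.refl, SPEquiv.symm, SPEquiv.trans⟩

/-- Series-parallel pomsets over `A`, as the free algebra on the sp-pomset axioms. -/
def Pomset (A : Type) : Type := Quotient (spSetoid A)

namespace Pomset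

variable {A : Type}

def mk (u : SPTerm A) : Pomset A := Quotient.mk (spSetoid A) u

/-- The empty pomset `1`. -/
def eps : Pomset A := mk SPTerm.one

/-- The primitive pomset consisting of a single event labelled `a`. -/
def atom (a : A) : Pomset A := mk (SPTerm.atom a)

/-- Sequential composition of pomsets. -/
def seq : Pomset A → Pomset A → Pomset A :=
  Quotient.lift₂ (fun u v => mk (u.seq v))
    (fun _ _ _ _ hu hv => Quotient.sound (SPEquiv.seqCongr hu hv))

/-- Parallel composition of pomsets. -/
def par : Pomset A → Pomset A → Pomset A :=
  Quotient.lift₂ (fun u v => mk (u.par v))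
    (fun _ _ _ _ hu hv => Quotient.sound (SPEquiv.parCongr hu hv))

/-- `U` is the empty pomset. -/
def IsEmptyP (U : Pomset A) : Prop := U = eps

/-- `U` is primitive: it consists of a single labelled event. -/
def Primitive (U : Pomset A) : Prop := ∃ a : A, U = atom a

/-- `U` is sequential: a sequential composition of two non-empty pomsets. -/
def Sequential (U : Pomset A) : Prop :=
  ∃ V W : Pomset A, V ≠ eps ∧ W ≠ eps ∧ U = seq V W

/-- `U` is parallel: a parallel composition of two non-empty pomsets. -/
def Parallel (U : Pomset A) : Prop :=
  ∃ V W : Pomset A, V ≠ eps ∧ W ≠ eps ∧ U = par V W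

/-- `U` is a sequential prime. -/
def SeqPrime (U : Pomset A) : Prop :=
  U ≠ eps ∧ ∀ V W : Pomset A, U = seq V W → V = eps ∨ W = eps

/-- `U` is a parallel prime. -/
def ParPrime (U : Pomset A) : Prop :=
  U ≠ eps ∧ ∀ V W : Pomset A, U = par V W → V = eps ∨ W = eps

/-- Sequential product of a list of pomsets. -/
def seqProd (l : List (Pomset A)) : Pomset A := l.foldr seq eps

/-- Parallel product of a list of pomsets. -/
def parProd (l : List (Pomset A)) : Pomset A := l.foldr par eps

end Pomset

/-- Pointwise sequential composition of pomset languages. -/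
def langSeq {A : Type} (L M : Set (Pomset A)) : Set (Pomset A) :=
  Set.image2 Pomset.seq L M

/-- Pointwise parallel composition of pomset languages. -/
def langPar {A : Type} (L M : Set (Pomset A)) : Set (Pomset A) :=
  Set.image2 Pomset.par L M

/-- `n`-fold sequential power of a language. -/
def langPow {A : Type} (L : Set (Pomset A)) : ℕ → Set (Pomset A)
  | 0 => {Pomset.eps}
  | n + 1 => langSeq L (langPow L n)

/-- Kleene closure of a pomset language. -/
def langStar {A : Type} (L : Set (Pomset A)) : Set (Pomset A) :=
  ⋃ n : ℕ, langPow L n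

/-- Series-rational expressions over `A`. -/
inductive SR (A : Type) : Type
  | zero : SR A
  | one : SR A
  | atom : A → SR A
  | plus : SR A → SR A → SR A
  | seq : SR A → SR A → SR A
  | par : SR A → SR A → SR A
  | star : SR A → SR A

/-- The sp-language semantics of series-rational expressions. -/
def sem {A : Type} : SR A → Set (Pomset A)
  | .zero => ∅
  | .one => {Pomset.eps}
  | .atom a => {Pomset.atom a}
  | .plus e f => sem e ∪ sem f
  | .seq e f => langSeq (sem e) (sem f)
  | .par e f => langPar (sem e) (sem f)
  | .star e => langStar (sem e)

/-- The syntactic predicate `F` characterising acceptance of the empty pomset. -/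
inductive EF {A : Type} : SR A → Prop
  | one : EF SR.one
  | plusLeft {e : SR A} (f : SR A) : EF e → EF (SR.plus e f)
  | plusRight (e : SR A) {f : SR A} : EF f → EF (SR.plus e f)
  | seq {e f : SR A} : EF e → EF f → EF (SR.seq e f)
  | par {e f : SR A} : EF e → EF f → EF (SR.par e f)
  | star (e : SR A) : EF (SR.star e)

/-- Pomset automata. -/
structure PA (A : Type) (Q : Type) where
  acc : Set Q
  δ : Q → A → Set Q
  γ : Q → Multiset Q → Set Q

/-- The run relation of a pomset automaton. -/
inductive Run {A Q : Type} (M : PA A Q) : Q → Pomset A → Q → Prop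
  | triv (q : Q) : Run M q Pomset.eps q
  | seqUnit {q : Q} {a : A} {q' : Q} :
      q' ∈ M.δ q a → Run M q (Pomset.atom a) q'
  | comp {q : Q} {U : Pomset A} {q'' : Q} {V : Pomset A} {q' : Q} :
      Run M q U q'' → Run M q'' V q' → Run M q (U.seq V) q'
  | parUnit {q q' : Q} (l : List (Q × Pomset A × Q)) :
      q' ∈ M.γ q (↑(l.map Prod.fst) : Multiset Q) →
      (∀ x ∈ l, x.2.2 ∈ M.acc) →
      (∀ x ∈ l, Run M x.1 x.2.1 x.2.2) →
      Run M q (Pomset.parProd (l.map fun x => x.2.1)) q'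

/-- Language of a state of a pomset automaton. -/
def PA.lang {A Q : Type} (M : PA A Q) (q : Q) : Set (Pomset A) :=
  {U | ∃ q' ∈ M.acc, Run M q U q'}

/-- The triple `q →^U q'` matches the trivial-run rule. -/
def TrivialRun {A Q : Type} (_M : PA A Q) (q : Q) (U : Pomset A) (q' : Q) : Prop :=
  U = Pomset.eps ∧ q = q'

/-- `q →^U q'` is a sequential unit run. -/
def SeqUnitRun {A Q : Type} (M : PA A Q) (q : Q) (U : Pomset A) (q' : Q) : Prop :=
  ∃ a : A, U = Pomset.atom a ∧ q' ∈ M.δ q a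

/-- `q →^U q'` is a parallel unit run. -/
def ParUnitRun {A Q : Type} (M : PA A Q) (q : Q) (U : Pomset A) (q' : Q) : Prop :=
  ∃ l : List (Q × Pomset A × Q),
    q' ∈ M.γ q (↑(l.map Prod.fst) : Multiset Q) ∧
    (∀ x ∈ l, x.2.2 ∈ M.acc ∧ Run M x.1 x.2.1 x.2.2) ∧
    U = Pomset.parProd (l.map fun x => x.2.1)

/-- `q →^U q'` is a unit run: a sequential or a parallel unit run. -/
def UnitRun {A Q : Type} (M : PA A Q) (q : Q) (U : Pomset A) (q' : Q) : Prop :=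
  SeqUnitRun M q U q' ∨ ParUnitRun M q U q'

/-- `q →^U q'` is a composite run: a sequential composition of two non-trivial runs. -/
def CompositeRun {A Q : Type} (M : PA A Q) (q : Q) (U : Pomset A) (q' : Q) : Prop :=
  ∃ (V W : Pomset A) (q'' : Q),
    U = V.seq W ∧ Run M q V q'' ∧ Run M q'' W q' ∧
    ¬ TrivialRun M q V q'' ∧ ¬ TrivialRun M q'' W q'

/-- The support preorder: `Supports M q' q` means `q' ⪯ q`. -/
inductive Supports {A Q : Type} (M : PA A Q) : Q → Q → Prop
  | refl (q : Q) : Supports M q q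
  | trans {q r p : Q} : Supports M q r → Supports M r p → Supports M q p
  | deltaStep {q : Q} {a : A} {q' : Q} : q' ∈ M.δ q a → Supports M q' q
  | gammaStep {q : Q} {φ : Multiset Q} {q' : Q} : q' ∈ M.γ q φ → Supports M q' q
  | forkStep {q : Q} {φ : Multiset Q} {r : Q} :
      r ∈ φ → (M.γ q φ).Nonempty → Supports M r q

/-- A pomset automaton is fork-acyclic when every fork target `r` of `q`
satisfies `r ≺ q`, i.e. `q ⋠ r`. -/
def ForkAcyclic {A Q : Type} (M : PA A Q) : Prop :=
  ∀ (q : Q) (φ : Multiset Q) (r : Q),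
    r ∈ φ → (M.γ q φ).Nonempty → ¬ Supports M q r

/-- A set of states is support-closed. -/
def SupportClosed {A Q : Type} (M : PA A Q) (S : Set Q) : Prop :=
  ∀ q ∈ S, ∀ q' : Q, Supports M q' q → q' ∈ S

/-- Restriction of a pomset automaton to a set of states. -/
def PA.restrict {A Q : Type} (M : PA A Q) (S : Set Q) : PA A {q : Q // q ∈ S} where
  acc := {q | q.val ∈ M.acc}
  δ := fun q a => {r | r.val ∈ M.δ q.val a}
  γ := fun q φ => {r | r.val ∈ M.γ q.val (φ.map Subtype.val)}

/-- `n`-forking automata. -/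
def NForking {A Q : Type} (M : PA A Q) (n : ℕ) : Prop :=
  ∀ (q : Q) (φ : Multiset Q), (M.γ q φ).Nonempty → n ≤ Multiset.card φ

/-- Parsimonious automata: no fork target accepts the empty pomset. -/
def Parsimonious {A Q : Type} (M : PA A Q) : Prop :=
  ∀ (p : Q) (φ : Multiset Q) (q : Q),
    q ∈ φ → (M.γ p φ).Nonempty → Pomset.eps ∉ M.lang q

/-- Flat-branching automata: forks from fork targets never reach accepting states. -/
def FlatBranching {A Q : Type} (M : PA A Q) : Prop :=
  ∀ (p : Q) (φ : Multiset Q) (q : Q),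
    q ∈ φ → (M.γ p φ).Nonempty → ∀ ψ : Multiset Q, M.γ q ψ ∩ M.acc = ∅

/-- Well-structured pomset automata. -/
def WellStructured {A Q : Type} (M : PA A Q) : Prop :=
  (∀ (q : Q) (φ : Multiset Q), (M.γ q φ).Nonempty → 2 ≤ Multiset.card φ) ∧
  ∀ (p : Q) (φ : Multiset Q) (q : Q), q ∈ φ → (M.γ p φ).Nonempty →
    q ∉ M.acc ∧ ∀ ψ : Multiset Q, M.γ q ψ ∩ M.acc = ∅

/-- The relation `⇝` characterising runs labelled by the empty pomset. -/
inductive Leadsto {A Q : Type} (M : PA A Q) : Q → Q → Prop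
  | refl (p : Q) : Leadsto M p p
  | trans {p r q : Q} : Leadsto M p r → Leadsto M r q → Leadsto M p q
  | fork {p q : Q} (l : List (Q × Q)) :
      q ∈ M.γ p (↑(l.map Prod.fst) : Multiset Q) →
      (∀ x ∈ l, x.2 ∈ M.acc) →
      (∀ x ∈ l, Leadsto M x.1 x.2) →
      Leadsto M p q

/-- Concatenate each expression of a set with `f` on the right. -/
def seqAfter {A : Type} (T : Set (SR A)) (f : SR A) : Set (SR A) :=
  (fun g => SR.seq g f) '' T

/-- Antimirov-style sequential derivatives of sr-expressions. -/
def deltaS {A : Type} : SR A → A → Set (SR A)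
  | .zero, _ => ∅
  | .one, _ => ∅
  | .atom b, a => {g | g = SR.one ∧ a = b}
  | .plus e f, a => deltaS e a ∪ deltaS f a
  | .seq e f, a => seqAfter (deltaS e a) f ∪ {g | g ∈ deltaS f a ∧ EF e}
  | .par _ _, _ => ∅
  | .star e, a => seqAfter (deltaS e a) (SR.star e)

/-- Antimirov-style parallel derivatives of sr-expressions. -/
def gammaS {A : Type} : SR A → Multiset (SR A) → Set (SR A)
  | .zero, _ => ∅
  | .one, _ => ∅
  | .atom _, _ => ∅
  | .plus e f, φ => gammaS e φ ∪ gammaS f φ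
  | .seq e f, φ => seqAfter (gammaS e φ) f ∪ {g | g ∈ gammaS f φ ∧ EF e}
  | .par e f, φ => {g | g = SR.one ∧ φ = {e, f}}
  | .star e, φ => seqAfter (gammaS e φ) (SR.star e)

/-- The syntactic pomset automaton on sr-expressions. -/
def synPA (A : Type) : PA A (SR A) where
  acc := {e | EF e}
  δ := deltaS
  γ := gammaS

/-- The parallel-nesting depth of an sr-expression. -/
def pdepth {A : Type} : SR A → ℕ
  | .zero => 0
  | .one => 0
  | .atom _ => 0
  | .plus e f => max (pdepth e) (pdepth f)
  | .seq e f => max (pdepth e) (pdepth f)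
  | .par e f => max (pdepth e) (pdepth f) + 1
  | .star e => pdepth e

/-- A substitution `ζ : Σ → 2^{SP(Δ)}` is atomic. -/
def Atomic {A B : Type} (ζ : A → Set (Pomset B)) : Prop :=
  (∀ a : A, ∀ U ∈ ζ a, Pomset.SeqPrime U) ∧
  (∀ a b : A, (ζ a ∩ ζ b).Nonempty ↔ a = b)

/-- Extension of a substitution to words. -/
def substWord {A B : Type} (ζ : A → Set (Pomset B)) : List A → Set (Pomset B)
  | [] => {Pomset.eps}
  | a :: w => langSeq (ζ a) (substWord ζ w)

/-- Extension of a substitution to word languages. -/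
def substLang {A B : Type} (ζ : A → Set (Pomset B)) (L : Set (List A)) :
    Set (Pomset B) :=
  ⋃ w ∈ L, substWord ζ w

/-- `L_A(α)` for a set `α` of states: the atom language of `α`. -/
def atomLang {Q U : Type} (LA : Q → Set U) (α : Set Q) : Set U :=
  (⋂ q ∈ α, LA q) \ (⋃ (q : Q) (_ : q ∉ α), LA q)


/-! ### Auxiliary development for the Kleene theorem -/

section Aux

namespace Pomset

variable {A : Type}

@[simp] theorem seq_mk (u v : SPTerm A) : (mk u).seq (mk v) = mk (u.seq v) := rfl
@[simp] theorem par_mk (u v : SPTerm A) : (mk u).par (mk v) = mk (u.par v) := rfl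

theorem sound {u v : SPTerm A} (h : SPEquiv u v) : mk u = mk v :=
  Quotient.sound h

theorem ind {p : Pomset A → Prop} (h : ∀ u : SPTerm A, p (mk u)) : ∀ U, p U :=
  Quotient.ind h

@[simp] theorem seq_eps (U : Pomset A) : U.seq eps = U := by
  induction U using Pomset.ind
  exact sound (SPEquiv.seqOneRight _)

@[simp] theorem eps_seq (U : Pomset A) : eps.seq U = U := by
  induction U using Pomset.ind
  exact sound (SPEquiv.seqOneLeft _)

theorem seq_assoc (U V W : Pomset A) : (U.seq V).seq W = U.seq (V.seq W) := by
  induction U using Pomset.ind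
  induction V using Pomset.ind
  induction W using Pomset.ind
  exact sound (SPEquiv.seqAssoc _ _ _)

@[simp] theorem par_eps (U : Pomset A) : U.par eps = U := by
  induction U using Pomset.ind
  exact sound (SPEquiv.parOne _)

theorem par_comm (U V : Pomset A) : U.par V = V.par U := by
  induction U using Pomset.ind
  induction V using Pomset.ind
  exact sound (SPEquiv.parComm _ _)

theorem par_assoc (U V W : Pomset A) : (U.par V).par W = U.par (V.par W) := by
  induction U using Pomset.ind
  induction V using Pomset.ind
  induction W using Pomset.ind
  exact sound (SPEquiv.parAssoc _ _ _)

@[simp] theorem eps_par (U : Pomset A) : eps.par U = U := by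
  rw [par_comm, par_eps]

@[simp] theorem parProd_nil : parProd ([] : List (Pomset A)) = eps := rfl

@[simp] theorem parProd_cons (U : Pomset A) (l : List (Pomset A)) :
    parProd (U :: l) = U.par (parProd l) := rfl

end Pomset

section Lang

variable {A : Type}

theorem mem_langSeq {L M : Set (Pomset A)} {U : Pomset A} :
    U ∈ langSeq L M ↔ ∃ V ∈ L, ∃ W ∈ M, V.seq W = U := by
  simp [langSeq, Set.mem_image2]

theorem seq_mem_langSeq {L M : Set (Pomset A)} {V W : Pomset A}
    (hV : V ∈ L) (hW : W ∈ M) : V.seq W ∈ langSeq L M :=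
  Set.mem_image2_of_mem hV hW

theorem mem_langPar {L M : Set (Pomset A)} {U : Pomset A} :
    U ∈ langPar L M ↔ ∃ V ∈ L, ∃ W ∈ M, V.par W = U := by
  simp [langPar, Set.mem_image2]

theorem par_mem_langPar {L M : Set (Pomset A)} {V W : Pomset A}
    (hV : V ∈ L) (hW : W ∈ M) : V.par W ∈ langPar L M :=
  Set.mem_image2_of_mem hV hW

theorem mem_langStar {L : Set (Pomset A)} {U : Pomset A} :
    U ∈ langStar L ↔ ∃ n, U ∈ langPow L n := by
  simp [langStar]

theorem eps_mem_langStar (L : Set (Pomset A)) : Pomset.eps ∈ langStar L :=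
  mem_langStar.2 ⟨0, rfl⟩

theorem seq_mem_langStar {L : Set (Pomset A)} {V W : Pomset A}
    (hV : V ∈ L) (hW : W ∈ langStar L) : V.seq W ∈ langStar L := by
  rcases mem_langStar.1 hW with ⟨n, hn⟩
  exact mem_langStar.2 ⟨n + 1, seq_mem_langSeq hV hn⟩

theorem langPar_comm (L M : Set (Pomset A)) : langPar L M = langPar M L := by
  ext U
  simp only [mem_langPar]
  constructor <;> rintro ⟨V, hV, W, hW, rfl⟩ <;>
    exact ⟨W, hW, V, hV, (Pomset.par_comm _ _)⟩

theorem langPar_assoc (L M N : Set (Pomset A)) :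
    langPar (langPar L M) N = langPar L (langPar M N) := by
  ext U
  simp only [mem_langPar]
  constructor
  · rintro ⟨_, ⟨V, hV, W, hW, rfl⟩, X, hX, rfl⟩
    exact ⟨V, hV, W.par X, ⟨W, hW, X, hX, rfl⟩, (Pomset.par_assoc _ _ _).symm⟩
  · rintro ⟨V, hV, _, ⟨W, hW, X, hX, rfl⟩, rfl⟩
    exact ⟨V.par W, ⟨V, hV, W, hW, rfl⟩, X, hX, Pomset.par_assoc _ _ _⟩

/-- Parallel product of a list of languages. -/
def listParLang (l : List (Set (Pomset A))) : Set (Pomset A) :=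
  l.foldr langPar {Pomset.eps}

@[simp] theorem listParLang_nil : listParLang ([] : List (Set (Pomset A))) = {Pomset.eps} := rfl

@[simp] theorem listParLang_cons (L : Set (Pomset A)) (l : List (Set (Pomset A))) :
    listParLang (L :: l) = langPar L (listParLang l) := rfl

theorem listParLang_perm {l l' : List (Set (Pomset A))} (h : l.Perm l') :
    listParLang l = listParLang l' := by
  induction h with
  | nil => rfl
  | cons x _ ih => simp [ih]
  | swap x y l =>
      simp only [listParLang_cons, ← langPar_assoc]
      rw [langPar_comm y x]
  | trans _ _ ih1 ih2 => rw [ih1, ih2]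

theorem parProd_mem_listParLang {ι : Type} (F : ι → Set (Pomset A))
    (lp : List (ι × Pomset A)) (h : ∀ x ∈ lp, x.2 ∈ F x.1) :
    Pomset.parProd (lp.map Prod.snd) ∈ listParLang ((lp.map Prod.fst).map F) := by
  induction lp with
  | nil => rfl
  | cons x lp ih =>
      simp only [List.map_cons, Pomset.parProd_cons, listParLang_cons]
      exact par_mem_langPar (h x (by simp)) (ih fun y hy => h y (by simp [hy]))

theorem exists_of_mem_listParLang {ι : Type} (F : ι → Set (Pomset A)) :
    ∀ (t : List ι) {U : Pomset A}, U ∈ listParLang (t.map F) →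
    ∃ lp : List (ι × Pomset A), lp.map Prod.fst = t ∧
      (∀ x ∈ lp, x.2 ∈ F x.1) ∧ U = Pomset.parProd (lp.map Prod.snd) := by
  intro t
  induction t with
  | nil =>
      intro U hU
      exact ⟨[], rfl, by simp, by simpa using hU⟩
  | cons a t ih =>
      intro U hU
      simp only [List.map_cons, listParLang_cons, mem_langPar] at hU
      rcases hU with ⟨V, hV, W, hW, rfl⟩
      rcases ih hW with ⟨lp, h1, h2, h3⟩
      refine ⟨(a, V) :: lp, by simp [h1], ?_, by simp [h3]⟩
      rintro x hx
      rcases List.mem_cons.1 hx with rfl | hx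
      · exact hV
      · exact h2 x hx

/-- Sum of a list of sr-expressions. -/
def sumSR {A : Type} (l : List (SR A)) : SR A := l.foldr SR.plus SR.zero

@[simp] theorem sem_sumSR (l : List (SR A)) :
    sem (sumSR l) = ⋃ g ∈ l, sem g := by
  induction l with
  | nil => simp [sumSR, sem]
  | cons g l ih =>
      show sem (SR.plus g (sumSR l)) = _
      simp [sem, ih]

/-- Parallel product of a list of sr-expressions. -/
def parSR {A : Type} (l : List (SR A)) : SR A := l.foldr SR.par SR.one

@[simp] theorem sem_parSR (l : List (SR A)) :
    sem (parSR l) = listParLang (l.map sem) := by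
  induction l with
  | nil => rfl
  | cons g l ih =>
      show sem (SR.par g (parSR l)) = _
      simp [sem, ih]

theorem EF_eps {e : SR A} (h : EF e) : Pomset.eps ∈ sem e := by
  induction h with
  | one => rfl
  | plusLeft f _ ih => exact Or.inl ih
  | plusRight e _ ih => exact Or.inr ih
  | seq _ _ ih1 ih2 =>
      have := seq_mem_langSeq ih1 ih2
      rwa [Pomset.seq_eps] at this
  | par _ _ ih1 ih2 =>
      have := par_mem_langPar ih1 ih2
      rwa [Pomset.par_eps] at this
  | star e => exact eps_mem_langStar _

end Lang

section Sound

variable {A : Type}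

theorem perm_pair {α : Type*} {l : List α} {a b : α} (h : l.Perm [a, b]) :
    l = [a, b] ∨ l = [b, a] := by
  match l, h.length_eq with
  | [x, y], _ =>
    have hx : x ∈ [a, b] := h.mem_iff.1 (by simp)
    rcases List.mem_pair.1 hx with rfl | rfl
    · have : [y].Perm [b] := h.cons_inv
      simp [List.perm_singleton.1 this]
    · have h' : ([x, y]).Perm [x, a] := h.trans (List.Perm.swap _ _ _)
      have : [y].Perm [a] := h'.cons_inv
      simp [List.perm_singleton.1 this]

theorem delta_sound : ∀ (e : SR A) (a : A) (g : SR A), g ∈ deltaS e a →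
    ∀ V ∈ sem g, (Pomset.atom a).seq V ∈ sem e := by
  intro e
  induction e with
  | zero => intro a g hg; exact absurd hg (by simp [deltaS])
  | one => intro a g hg; exact absurd hg (by simp [deltaS])
  | atom b =>
      rintro a g ⟨rfl, rfl⟩ V hV
      have : V = Pomset.eps := by simpa [sem] using hV
      subst this
      simp [sem, Pomset.atom]
  | plus e f ihe ihf =>
      rintro a g (hg | hg) V hV
      · exact Or.inl (ihe a g hg V hV)
      · exact Or.inr (ihf a g hg V hV)
  | seq e f ihe ihf =>
      rintro a g (⟨h, hh, rfl⟩ | ⟨hg, hef⟩) V hV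
      · rcases mem_langSeq.1 hV with ⟨V1, hV1, V2, hV2, rfl⟩
        rw [← Pomset.seq_assoc]
        exact seq_mem_langSeq (ihe a h hh V1 hV1) hV2
      · have : (Pomset.eps).seq ((Pomset.atom a).seq V) ∈ sem (SR.seq e f) :=
          seq_mem_langSeq (EF_eps hef) (ihf a g hg V hV)
        rwa [Pomset.eps_seq] at this
  | par e f ihe ihf =>
      intro a g hg; exact absurd hg (by simp [deltaS])
  | star e ihe =>
      rintro a g ⟨h, hh, rfl⟩ V hV
      rcases mem_langSeq.1 hV with ⟨V1, hV1, V2, hV2, rfl⟩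
      rw [← Pomset.seq_assoc]
      exact seq_mem_langStar (ihe a h hh V1 hV1) hV2

theorem gamma_sound : ∀ (e : SR A) (φ : Multiset (SR A)) (g : SR A), g ∈ gammaS e φ →
    ∀ lp : List (SR A × Pomset A), (↑(lp.map Prod.fst) : Multiset (SR A)) = φ →
    (∀ x ∈ lp, x.2 ∈ sem x.1) →
    ∀ V ∈ sem g, (Pomset.parProd (lp.map Prod.snd)).seq V ∈ sem e := by
  intro e
  induction e with
  | zero => intro φ g hg; exact absurd hg (by simp [gammaS])
  | one => intro φ g hg; exact absurd hg (by simp [gammaS])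
  | atom b => intro φ g hg; exact absurd hg (by simp [gammaS])
  | plus e f ihe ihf =>
      rintro φ g (hg | hg) lp hφ hlp V hV
      · exact Or.inl (ihe φ g hg lp hφ hlp V hV)
      · exact Or.inr (ihf φ g hg lp hφ hlp V hV)
  | seq e f ihe ihf =>
      rintro φ g (⟨h, hh, rfl⟩ | ⟨hg, hef⟩) lp hφ hlp V hV
      · rcases mem_langSeq.1 hV with ⟨V1, hV1, V2, hV2, rfl⟩
        rw [← Pomset.seq_assoc]
        exact seq_mem_langSeq (ihe φ h hh lp hφ hlp V1 hV1) hV2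
      · have : (Pomset.eps).seq ((Pomset.parProd (lp.map Prod.snd)).seq V) ∈ sem (SR.seq e f) :=
          seq_mem_langSeq (EF_eps hef) (ihf φ g hg lp hφ hlp V hV)
        rwa [Pomset.eps_seq] at this
  | par e f ihe ihf =>
      rintro φ g ⟨rfl, rfl⟩ lp hφ hlp V hV
      have hVe : V = Pomset.eps := by simpa [sem] using hV
      subst hVe
      rw [Pomset.seq_eps]
      have hperm : (lp.map Prod.fst).Perm [e, f] := by
        rw [← Multiset.coe_eq_coe]
        rw [hφ]; rfl
      rcases perm_pair hperm with hl | hl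
      · match lp, hl with
        | [x, y], hl =>
          have hx : x.1 = e := by simpa using congrArg (fun t => t.head?) hl
          have hy : y.1 = f := by simpa using congrArg (fun t => t.tail.head?) hl
          show Pomset.parProd [x.2, y.2] ∈ _
          have : Pomset.parProd [x.2, y.2] = x.2.par y.2 := by
            simp [Pomset.parProd_cons]
          rw [this]
          exact par_mem_langPar (hx ▸ hlp x (by simp)) (hy ▸ hlp y (by simp))
      · match lp, hl with
        | [x, y], hl =>
          have hx : x.1 = f := by simpa using congrArg (fun t => t.head?) hl
          have hy : y.1 = e := by simpa using congrArg (fun t => t.tail.head?) hl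
          show Pomset.parProd [x.2, y.2] ∈ _
          have : Pomset.parProd [x.2, y.2] = y.2.par x.2 := by
            simp [Pomset.parProd_cons, Pomset.par_comm]
          rw [this]
          exact par_mem_langPar (hy ▸ hlp y (by simp)) (hx ▸ hlp x (by simp))
  | star e ihe =>
      rintro φ g ⟨h, hh, rfl⟩ lp hφ hlp V hV
      rcases mem_langSeq.1 hV with ⟨V1, hV1, V2, hV2, rfl⟩
      rw [← Pomset.seq_assoc]
      exact seq_mem_langStar (ihe φ h hh lp hφ hlp V1 hV1) hV2

theorem run_sound {e : SR A} {U : Pomset A} {f : SR A}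
    (h : Run (synPA A) e U f) : ∀ V ∈ sem f, U.seq V ∈ sem e := by
  induction h with
  | triv q => intro V hV; rwa [Pomset.eps_seq]
  | seqUnit hq => exact delta_sound _ _ _ hq
  | comp h1 h2 ih1 ih2 =>
      intro V hV
      rw [Pomset.seq_assoc]
      exact ih1 _ (ih2 V hV)
  | parUnit l hγ hacc hruns ih =>
      intro V hV
      have hmem : ∀ y ∈ (l.map fun x => (x.1, x.2.1)), y.2 ∈ sem y.1 := by
        rintro y hy
        rcases List.mem_map.1 hy with ⟨x, hx, rfl⟩
        have := ih x hx Pomset.eps (EF_eps (hacc x hx))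
        rwa [Pomset.seq_eps] at this
      have := gamma_sound _ _ _ hγ (l.map fun x => (x.1, x.2.1))
        (by rw [List.map_map]; rfl) hmem V hV
      simpa [List.map_map, Function.comp_def] using this

end Sound

section Complete

variable {A Q : Type}

theorem unitRun_run {M : PA A Q} {p : Q} {V : Pomset A} {r : Q}
    (h : UnitRun M p V r) : Run M p V r := by
  rcases h with ⟨a, rfl, ha⟩ | ⟨l, hγ, hl, rfl⟩
  · exact Run.seqUnit ha
  · exact Run.parUnit l hγ (fun x hx => (hl x hx).1) (fun x hx => (hl x hx).2)

theorem run_supports {M : PA A Q} {p : Q} {U : Pomset A} {p' : Q}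
    (h : Run M p U p') : Supports M p' p := by
  induction h with
  | triv q => exact Supports.refl q
  | seqUnit hq => exact Supports.deltaStep hq
  | comp h1 h2 ih1 ih2 => exact Supports.trans ih2 ih1
  | parUnit l hγ hacc hruns ih => exact Supports.gammaStep hγ

theorem run_decomp {M : PA A Q} {p : Q} {U : Pomset A} {p' : Q}
    (h : Run M p U p') :
    (U = Pomset.eps ∧ p = p') ∨
    ∃ V W r, U = V.seq W ∧ UnitRun M p V r ∧ Run M r W p' := by
  induction h with
  | triv q => exact Or.inl ⟨rfl, rfl⟩
  | seqUnit hq =>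
      exact Or.inr ⟨_, Pomset.eps, _, (Pomset.seq_eps _).symm,
        Or.inl ⟨_, rfl, hq⟩, Run.triv _⟩
  | @parUnit q q' l hγ hacc hruns ih =>
      exact Or.inr ⟨_, Pomset.eps, q', (Pomset.seq_eps _).symm,
        Or.inr ⟨l, hγ, fun x hx => ⟨hacc x hx, hruns x hx⟩, rfl⟩, Run.triv _⟩
  | @comp q U q'' V q' h1 h2 ih1 ih2 =>
      rcases ih1 with ⟨rfl, rfl⟩ | ⟨V1, W1, r, rfl, hu, hrest⟩
      · rcases ih2 with ⟨rfl, rfl⟩ | ⟨V1, W1, r, rfl, hu, hrest⟩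
        · exact Or.inl ⟨by rw [Pomset.eps_seq], rfl⟩
        · exact Or.inr ⟨V1, W1, r, by rw [Pomset.eps_seq], hu, hrest⟩
      · exact Or.inr ⟨V1, W1.seq V, r, by rw [Pomset.seq_assoc], hu, Run.comp hrest h2⟩

/-- Lifting a run to the left component of a sequential product. -/
theorem run_seq_right {e : SR A} {U : Pomset A} {g : SR A} (f : SR A)
    (h : Run (synPA A) e U g) : Run (synPA A) (e.seq f) U (g.seq f) := by
  induction h with
  | triv q => exact Run.triv _
  | @seqUnit q a q' hq =>
      exact Run.seqUnit (Or.inl ⟨q', hq, rfl⟩)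
  | comp h1 h2 ih1 ih2 => exact Run.comp ih1 ih2
  | @parUnit q q' l hγ hacc hruns ih =>
      exact Run.parUnit l (Or.inl ⟨q', hγ, rfl⟩) hacc hruns

/-- Skipping an `F`-expression on the left of a sequential product. -/
theorem run_skip {g f : SR A} (hg : EF g) {W : Pomset A} {h : SR A}
    (hr : Run (synPA A) f W h) :
    ∃ h', Run (synPA A) (g.seq f) W h' ∧ (EF h → EF h') := by
  rcases run_decomp hr with ⟨rfl, rfl⟩ | ⟨V1, W1, p, rfl, hu, hrest⟩
  · exact ⟨g.seq f, Run.triv _, fun hf => EF.seq hg hf⟩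
  · refine ⟨h, ?_, fun hh => hh⟩
    have hu' : UnitRun (synPA A) (g.seq f) V1 p := by
      rcases hu with ⟨a, rfl, ha⟩ | ⟨l, hγ, hl, rfl⟩
      · exact Or.inl ⟨a, rfl, Or.inr ⟨ha, hg⟩⟩
      · exact Or.inr ⟨l, Or.inr ⟨hγ, hg⟩, hl, rfl⟩
    exact Run.comp (unitRun_run hu') hrest

theorem star_complete {e : SR A}
    (he : ∀ V ∈ sem e, ∃ g, EF g ∧ Run (synPA A) e V g) :
    ∀ (n : ℕ) (U : Pomset A), U ∈ langPow (sem e) n →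
      ∃ h, EF h ∧ Run (synPA A) (SR.star e) U h := by
  intro n
  induction n with
  | zero =>
      intro U hU
      have : U = Pomset.eps := by simpa [langPow] using hU
      subst this
      exact ⟨SR.star e, EF.star e, Run.triv _⟩
  | succ n ih =>
      intro U hU
      rcases mem_langSeq.1 hU with ⟨V, hV, W, hW, rfl⟩
      rcases he V hV with ⟨g, hgEF, hgrun⟩
      rcases run_decomp hgrun with ⟨rfl, rfl⟩ | ⟨V1, W1, p, rfl, hu, hrest⟩
      · rcases ih W hW with ⟨h, hh, hrun⟩
        exact ⟨h, hh, by rwa [Pomset.eps_seq]⟩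
      · have hu' : UnitRun (synPA A) (SR.star e) V1 (p.seq (SR.star e)) := by
          rcases hu with ⟨a, rfl, ha⟩ | ⟨l, hγ, hl, rfl⟩
          · exact Or.inl ⟨a, rfl, ⟨p, ha, rfl⟩⟩
          · exact Or.inr ⟨l, ⟨p, hγ, rfl⟩, hl, rfl⟩
        have h1 : Run (synPA A) (p.seq (SR.star e)) W1 (g.seq (SR.star e)) :=
          run_seq_right _ hrest
        rcases ih W hW with ⟨h, hh, hrun⟩
        rcases run_skip hgEF hrun with ⟨h', hrun', hEF⟩
        refine ⟨h', hEF hh, ?_⟩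
        have : Run (synPA A) (SR.star e) (V1.seq (W1.seq W)) h' :=
          Run.comp (unitRun_run hu') (Run.comp h1 hrun')
        rwa [← Pomset.seq_assoc] at this

theorem run_plus_left {e : SR A} (f : SR A) {U : Pomset A} {g : SR A}
    (h : Run (synPA A) e U g) (hg : EF g) :
    ∃ h', EF h' ∧ Run (synPA A) (SR.plus e f) U h' := by
  rcases run_decomp h with ⟨rfl, rfl⟩ | ⟨V1, W1, p, rfl, hu, hrest⟩
  · exact ⟨SR.plus e f, EF.plusLeft f hg, Run.triv _⟩
  · refine ⟨g, hg, ?_⟩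
    have hu' : UnitRun (synPA A) (SR.plus e f) V1 p := by
      rcases hu with ⟨a, rfl, ha⟩ | ⟨l, hγ, hl, rfl⟩
      · exact Or.inl ⟨a, rfl, Or.inl ha⟩
      · exact Or.inr ⟨l, Or.inl hγ, hl, rfl⟩
    exact Run.comp (unitRun_run hu') hrest

theorem run_plus_right (e : SR A) {f : SR A} {U : Pomset A} {g : SR A}
    (h : Run (synPA A) f U g) (hg : EF g) :
    ∃ h', EF h' ∧ Run (synPA A) (SR.plus e f) U h' := by
  rcases run_decomp h with ⟨rfl, rfl⟩ | ⟨V1, W1, p, rfl, hu, hrest⟩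
  · exact ⟨SR.plus e f, EF.plusRight e hg, Run.triv _⟩
  · refine ⟨g, hg, ?_⟩
    have hu' : UnitRun (synPA A) (SR.plus e f) V1 p := by
      rcases hu with ⟨a, rfl, ha⟩ | ⟨l, hγ, hl, rfl⟩
      · exact Or.inl ⟨a, rfl, Or.inr ha⟩
      · exact Or.inr ⟨l, Or.inr hγ, hl, rfl⟩
    exact Run.comp (unitRun_run hu') hrest

theorem run_complete : ∀ (e : SR A) (U : Pomset A), U ∈ sem e →
    ∃ g, EF g ∧ Run (synPA A) e U g := by
  intro e
  induction e with
  | zero => intro U hU; exact absurd hU (by simp [sem])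
  | one =>
      intro U hU
      have : U = Pomset.eps := by simpa [sem] using hU
      subst this
      exact ⟨SR.one, EF.one, Run.triv _⟩
  | atom a =>
      intro U hU
      have : U = Pomset.atom a := by simpa [sem] using hU
      subst this
      exact ⟨SR.one, EF.one, Run.seqUnit (show SR.one ∈ deltaS (SR.atom a) a from ⟨rfl, rfl⟩)⟩
  | plus e f ihe ihf =>
      rintro U (hU | hU)
      · rcases ihe U hU with ⟨g, hg, hrun⟩
        exact run_plus_left f hrun hg
      · rcases ihf U hU with ⟨g, hg, hrun⟩
        exact run_plus_right e hrun hg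
  | seq e f ihe ihf =>
      intro U hU
      rcases mem_langSeq.1 hU with ⟨V, hV, W, hW, rfl⟩
      rcases ihe V hV with ⟨g, hg, hgrun⟩
      rcases ihf W hW with ⟨h, hh, hhrun⟩
      rcases run_skip hg hhrun with ⟨h', hrun', hEF⟩
      exact ⟨h', hEF hh, Run.comp (run_seq_right f hgrun) hrun'⟩
  | par e f ihe ihf =>
      intro U hU
      rcases mem_langPar.1 hU with ⟨V, hV, W, hW, rfl⟩
      rcases ihe V hV with ⟨g, hg, hgrun⟩
      rcases ihf W hW with ⟨h, hh, hhrun⟩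
      refine ⟨SR.one, EF.one, ?_⟩
      have hγ : SR.one ∈ (synPA A).γ (SR.par e f)
          (↑(([(e, V, g), (f, W, h)].map Prod.fst) : List (SR A)) : Multiset (SR A)) := by
        show SR.one ∈ gammaS (SR.par e f) _
        exact ⟨rfl, rfl⟩
      have := Run.parUnit (M := synPA A) (q := SR.par e f) (q' := SR.one)
        [(e, V, g), (f, W, h)] hγ
        (by rintro x hx; rcases List.mem_pair.1 hx with rfl | rfl <;> assumption)
        (by rintro x hx; rcases List.mem_pair.1 hx with rfl | rfl <;> assumption)
      simpa using this
  | star e ihe =>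
      intro U hU
      rcases mem_langStar.1 hU with ⟨n, hn⟩
      exact star_complete ihe n U hn

theorem sem_eq_synLang (e : SR A) : sem e = (synPA A).lang e := by
  ext U
  constructor
  · intro hU
    rcases run_complete e U hU with ⟨g, hg, hrun⟩
    exact ⟨g, hg, hrun⟩
  · rintro ⟨g, hg, hrun⟩
    have := run_sound hrun Pomset.eps (EF_eps hg)
    rwa [Pomset.seq_eps] at this

end Complete

section Syn

variable {A : Type}

theorem delta_pdepth : ∀ {e : SR A} {a : A} {g : SR A}, g ∈ deltaS e a →
    pdepth g ≤ pdepth e := by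
  intro e
  induction e with
  | zero => intro a g hg; exact absurd hg (by simp [deltaS])
  | one => intro a g hg; exact absurd hg (by simp [deltaS])
  | atom b => rintro a g ⟨rfl, rfl⟩; simp [pdepth]
  | plus e f ihe ihf =>
      rintro a g (hg | hg)
      · exact le_trans (ihe hg) (le_max_left _ _)
      · exact le_trans (ihf hg) (le_max_right _ _)
  | seq e f ihe ihf =>
      rintro a g (⟨h, hh, rfl⟩ | ⟨hg, _⟩)
      · exact max_le_max (ihe hh) le_rfl
      · exact le_trans (ihf hg) (le_max_right _ _)
  | par e f ihe ihf => intro a g hg; exact absurd hg (by simp [deltaS])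
  | star e ihe =>
      rintro a g ⟨h, hh, rfl⟩
      exact max_le (le_trans (ihe hh) le_rfl) le_rfl

theorem gamma_pdepth : ∀ {e : SR A} {φ : Multiset (SR A)} {g : SR A}, g ∈ gammaS e φ →
    pdepth g ≤ pdepth e ∧ ∀ r ∈ φ, pdepth r < pdepth e := by
  intro e
  induction e with
  | zero => intro φ g hg; exact absurd hg (by simp [gammaS])
  | one => intro φ g hg; exact absurd hg (by simp [gammaS])
  | atom b => intro φ g hg; exact absurd hg (by simp [gammaS])
  | plus e f ihe ihf =>
      rintro φ g (hg | hg)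
      · exact ⟨le_trans (ihe hg).1 (le_max_left _ _),
          fun r hr => lt_of_lt_of_le ((ihe hg).2 r hr) (le_max_left _ _)⟩
      · exact ⟨le_trans (ihf hg).1 (le_max_right _ _),
          fun r hr => lt_of_lt_of_le ((ihf hg).2 r hr) (le_max_right _ _)⟩
  | seq e f ihe ihf =>
      rintro φ g (⟨h, hh, rfl⟩ | ⟨hg, _⟩)
      · exact ⟨max_le_max (ihe hh).1 le_rfl,
          fun r hr => lt_of_lt_of_le ((ihe hh).2 r hr) (le_max_left _ _)⟩
      · exact ⟨le_trans (ihf hg).1 (le_max_right _ _),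
          fun r hr => lt_of_lt_of_le ((ihf hg).2 r hr) (le_max_right _ _)⟩
  | par e f ihe ihf =>
      rintro φ g ⟨rfl, rfl⟩
      refine ⟨by simp [pdepth], ?_⟩
      intro r hr
      rcases Multiset.mem_cons.1 hr with rfl | hr
      · exact lt_of_le_of_lt (le_max_left _ (pdepth f)) (Nat.lt_succ_self _)
      · have : r = f := by simpa using hr
        subst this
        exact lt_of_le_of_lt (le_max_right (pdepth e) _) (Nat.lt_succ_self _)
  | star e ihe =>
      rintro φ g ⟨h, hh, rfl⟩
      exact ⟨max_le (ihe hh).1 le_rfl, fun r hr => (ihe hh).2 r hr⟩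

theorem supports_pdepth {p r : SR A} (h : Supports (synPA A) p r) :
    pdepth p ≤ pdepth r := by
  induction h with
  | refl q => exact le_rfl
  | trans h1 h2 ih1 ih2 => exact le_trans ih1 ih2
  | deltaStep hq => exact delta_pdepth hq
  | gammaStep hq => exact (gamma_pdepth hq).1
  | forkStep hr hne =>
      rcases hne with ⟨g, hg⟩
      exact le_of_lt ((gamma_pdepth hg).2 _ hr)

theorem synPA_forkAcyclic : ForkAcyclic (synPA A) := by
  intro q φ r hr hne hsup
  rcases hne with ⟨g, hg⟩
  have h1 : pdepth r < pdepth q := (gamma_pdepth hg).2 r hr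
  have h2 : pdepth q ≤ pdepth r := supports_pdepth hsup
  omega

/-- The possible fork multisets of an sr-expression. -/
def FSet : SR A → Set (Multiset (SR A))
  | .zero => ∅
  | .one => ∅
  | .atom _ => ∅
  | .plus e f => FSet e ∪ FSet f
  | .seq e f => FSet e ∪ FSet f
  | .par e f => {{e, f}}
  | .star e => FSet e

theorem FSet_finite : ∀ e : SR A, (FSet e).Finite := by
  intro e
  induction e with
  | zero => exact Set.finite_empty
  | one => exact Set.finite_empty
  | atom a => exact Set.finite_empty
  | plus e f ihe ihf => exact ihe.union ihf
  | seq e f ihe ihf => exact ihe.union ihf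
  | par e f _ _ => exact Set.finite_singleton _
  | star e ihe => exact ihe

theorem gamma_mem_FSet : ∀ {e : SR A} {φ : Multiset (SR A)},
    (gammaS e φ).Nonempty → φ ∈ FSet e := by
  intro e
  induction e with
  | zero => rintro φ ⟨g, hg⟩; exact absurd hg (by simp [gammaS])
  | one => rintro φ ⟨g, hg⟩; exact absurd hg (by simp [gammaS])
  | atom a => rintro φ ⟨g, hg⟩; exact absurd hg (by simp [gammaS])
  | plus e f ihe ihf =>
      rintro φ ⟨g, (hg | hg)⟩
      · exact Or.inl (ihe ⟨g, hg⟩)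
      · exact Or.inr (ihf ⟨g, hg⟩)
  | seq e f ihe ihf =>
      rintro φ ⟨g, (⟨h, hh, rfl⟩ | ⟨hg, _⟩)⟩
      · exact Or.inl (ihe ⟨h, hh⟩)
      · exact Or.inr (ihf ⟨g, hg⟩)
  | par e f ihe ihf =>
      rintro φ ⟨g, ⟨rfl, rfl⟩⟩
      rfl
  | star e ihe =>
      rintro φ ⟨g, ⟨h, hh, rfl⟩⟩
      exact ihe ⟨h, hh⟩

/-- The (finite) closure of an sr-expression under derivatives and forks. -/
def Clo : SR A → Set (SR A)
  | .zero => {.zero}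
  | .one => {.one}
  | .atom a => {.atom a, .one}
  | .plus e f => insert (.plus e f) (Clo e ∪ Clo f)
  | .seq e f => Clo e ∪ ((fun g => SR.seq g f) '' Clo e) ∪ Clo f
  | .par e f => insert (.par e f) (insert .one (Clo e ∪ Clo f))
  | .star e => insert (.star e) (Clo e ∪ ((fun g => SR.seq g (.star e)) '' Clo e))

theorem self_mem_Clo : ∀ e : SR A, e ∈ Clo e := by
  intro e
  induction e with
  | zero => exact rfl
  | one => exact rfl
  | atom a => exact Or.inl rfl
  | plus e f _ _ => exact Or.inl rfl
  | seq e f ihe _ => exact Or.inl (Or.inr ⟨e, ihe, rfl⟩)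
  | par e f _ _ => exact Or.inl rfl
  | star e _ => exact Or.inl rfl

theorem Clo_finite : ∀ e : SR A, (Clo e).Finite := by
  intro e
  induction e with
  | zero => exact Set.finite_singleton _
  | one => exact Set.finite_singleton _
  | atom a => exact (Set.finite_singleton _).insert _
  | plus e f ihe ihf => exact ((ihe.union ihf)).insert _
  | seq e f ihe ihf => exact (ihe.union (ihe.image _)).union ihf
  | par e f ihe ihf => exact (((ihe.union ihf)).insert _).insert _
  | star e ihe => exact ((ihe.union (ihe.image _))).insert _

theorem Clo_closed : ∀ (e : SR A) (g : SR A), g ∈ Clo e →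
    (∀ a, deltaS g a ⊆ Clo e) ∧ (∀ φ, gammaS g φ ⊆ Clo e) ∧
    (∀ φ, (gammaS g φ).Nonempty → ∀ r ∈ φ, r ∈ Clo e) := by
  intro e
  induction e with
  | zero =>
      rintro g rfl
      exact ⟨fun a => by simp [deltaS], fun φ => by simp [gammaS],
        fun φ hφ => absurd hφ (by simp [gammaS])⟩
  | one =>
      rintro g rfl
      exact ⟨fun a => by simp [deltaS], fun φ => by simp [gammaS],
        fun φ hφ => absurd hφ (by simp [gammaS])⟩
  | atom b =>
      rintro g (rfl | rfl)
      · exact ⟨fun a => by rintro h ⟨rfl, rfl⟩; exact Or.inr rfl,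
          fun φ => by simp [gammaS], fun φ hφ => absurd hφ (by simp [gammaS])⟩
      · exact ⟨fun a => by simp [deltaS], fun φ => by simp [gammaS],
          fun φ hφ => absurd hφ (by simp [gammaS])⟩
  | plus e f ihe ihf =>
      rintro g (rfl | (hg | hg))
      · refine ⟨?_, ?_, ?_⟩
        · rintro a h (hh | hh)
          · exact Or.inr (Or.inl ((ihe e (self_mem_Clo e)).1 a hh))
          · exact Or.inr (Or.inr ((ihf f (self_mem_Clo f)).1 a hh))
        · rintro φ h (hh | hh)
          · exact Or.inr (Or.inl ((ihe e (self_mem_Clo e)).2.1 φ hh))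
          · exact Or.inr (Or.inr ((ihf f (self_mem_Clo f)).2.1 φ hh))
        · rintro φ ⟨h, (hh | hh)⟩ r hr
          · exact Or.inr (Or.inl ((ihe e (self_mem_Clo e)).2.2 φ ⟨h, hh⟩ r hr))
          · exact Or.inr (Or.inr ((ihf f (self_mem_Clo f)).2.2 φ ⟨h, hh⟩ r hr))
      · exact ⟨fun a h hh => Or.inr (Or.inl ((ihe g hg).1 a hh)),
          fun φ h hh => Or.inr (Or.inl ((ihe g hg).2.1 φ hh)),
          fun φ hφ r hr => Or.inr (Or.inl ((ihe g hg).2.2 φ hφ r hr))⟩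
      · exact ⟨fun a h hh => Or.inr (Or.inr ((ihf g hg).1 a hh)),
          fun φ h hh => Or.inr (Or.inr ((ihf g hg).2.1 φ hh)),
          fun φ hφ r hr => Or.inr (Or.inr ((ihf g hg).2.2 φ hφ r hr))⟩
  | seq e f ihe ihf =>
      rintro g ((hg | ⟨h0, hh0, rfl⟩) | hg)
      · exact ⟨fun a h hh => Or.inl (Or.inl ((ihe g hg).1 a hh)),
          fun φ h hh => Or.inl (Or.inl ((ihe g hg).2.1 φ hh)),
          fun φ hφ r hr => Or.inl (Or.inl ((ihe g hg).2.2 φ hφ r hr))⟩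
      · refine ⟨?_, ?_, ?_⟩
        · rintro a h (⟨h1, hh1, rfl⟩ | ⟨hh, _⟩)
          · exact Or.inl (Or.inr ⟨h1, (ihe h0 hh0).1 a hh1, rfl⟩)
          · exact Or.inr ((ihf f (self_mem_Clo f)).1 a hh)
        · rintro φ h (⟨h1, hh1, rfl⟩ | ⟨hh, _⟩)
          · exact Or.inl (Or.inr ⟨h1, (ihe h0 hh0).2.1 φ hh1, rfl⟩)
          · exact Or.inr ((ihf f (self_mem_Clo f)).2.1 φ hh)
        · rintro φ ⟨h, (⟨h1, hh1, rfl⟩ | ⟨hh, _⟩)⟩ r hr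
          · exact Or.inl (Or.inl ((ihe h0 hh0).2.2 φ ⟨h1, hh1⟩ r hr))
          · exact Or.inr ((ihf f (self_mem_Clo f)).2.2 φ ⟨h, hh⟩ r hr)
      · exact ⟨fun a h hh => Or.inr ((ihf g hg).1 a hh),
          fun φ h hh => Or.inr ((ihf g hg).2.1 φ hh),
          fun φ hφ r hr => Or.inr ((ihf g hg).2.2 φ hφ r hr)⟩
  | par e f ihe ihf =>
      rintro g (rfl | (rfl | (hg | hg)))
      · refine ⟨fun a => by simp [deltaS], ?_, ?_⟩
        · rintro φ h ⟨rfl, rfl⟩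
          exact Or.inr (Or.inl rfl)
        · rintro φ ⟨h, ⟨rfl, rfl⟩⟩ r hr
          rcases Multiset.mem_cons.1 hr with hre | hr
          · subst hre
            exact Or.inr (Or.inr (Or.inl (self_mem_Clo _)))
          · have hrf : r = f := by simpa using hr
            subst hrf
            exact Or.inr (Or.inr (Or.inr (self_mem_Clo _)))
      · exact ⟨fun a => by simp [deltaS], fun φ => by simp [gammaS],
          fun φ hφ => absurd hφ (by simp [gammaS])⟩
      · exact ⟨fun a h hh => Or.inr (Or.inr (Or.inl ((ihe g hg).1 a hh))),
          fun φ h hh => Or.inr (Or.inr (Or.inl ((ihe g hg).2.1 φ hh))),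
          fun φ hφ r hr => Or.inr (Or.inr (Or.inl ((ihe g hg).2.2 φ hφ r hr)))⟩
      · exact ⟨fun a h hh => Or.inr (Or.inr (Or.inr ((ihf g hg).1 a hh))),
          fun φ h hh => Or.inr (Or.inr (Or.inr ((ihf g hg).2.1 φ hh))),
          fun φ hφ r hr => Or.inr (Or.inr (Or.inr ((ihf g hg).2.2 φ hφ r hr)))⟩
  | star e ihe =>
      rintro g (rfl | (hg | ⟨h0, hh0, rfl⟩))
      · refine ⟨?_, ?_, ?_⟩
        · rintro a h ⟨h1, hh1, rfl⟩
          exact Or.inr (Or.inr ⟨h1, (ihe e (self_mem_Clo e)).1 a hh1, rfl⟩)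
        · rintro φ h ⟨h1, hh1, rfl⟩
          exact Or.inr (Or.inr ⟨h1, (ihe e (self_mem_Clo e)).2.1 φ hh1, rfl⟩)
        · rintro φ ⟨h, ⟨h1, hh1, rfl⟩⟩ r hr
          exact Or.inr (Or.inl ((ihe e (self_mem_Clo e)).2.2 φ ⟨h1, hh1⟩ r hr))
      · exact ⟨fun a h hh => Or.inr (Or.inl ((ihe g hg).1 a hh)),
          fun φ h hh => Or.inr (Or.inl ((ihe g hg).2.1 φ hh)),
          fun φ hφ r hr => Or.inr (Or.inl ((ihe g hg).2.2 φ hφ r hr))⟩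
      · refine ⟨?_, ?_, ?_⟩
        · rintro a h (⟨h1, hh1, rfl⟩ | ⟨⟨h1, hh1, rfl⟩, _⟩)
          · exact Or.inr (Or.inr ⟨h1, (ihe h0 hh0).1 a hh1, rfl⟩)
          · exact Or.inr (Or.inr ⟨h1, (ihe e (self_mem_Clo e)).1 a hh1, rfl⟩)
        · rintro φ h (⟨h1, hh1, rfl⟩ | ⟨⟨h1, hh1, rfl⟩, _⟩)
          · exact Or.inr (Or.inr ⟨h1, (ihe h0 hh0).2.1 φ hh1, rfl⟩)
          · exact Or.inr (Or.inr ⟨h1, (ihe e (self_mem_Clo e)).2.1 φ hh1, rfl⟩)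
        · rintro φ ⟨h, (⟨h1, hh1, rfl⟩ | ⟨⟨h1, hh1, rfl⟩, _⟩)⟩ r hr
          · exact Or.inr (Or.inl ((ihe h0 hh0).2.2 φ ⟨h1, hh1⟩ r hr))
          · exact Or.inr (Or.inl ((ihe e (self_mem_Clo e)).2.2 φ ⟨h1, hh1⟩ r hr))

theorem Clo_supportClosed (e : SR A) : SupportClosed (synPA A) (Clo e) := by
  intro q hq q' hsup
  induction hsup with
  | refl q => exact hq
  | trans h1 h2 ih1 ih2 => exact ih1 (ih2 hq)
  | deltaStep h => exact (Clo_closed e _ hq).1 _ h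
  | gammaStep h => exact (Clo_closed e _ hq).2.1 _ h
  | forkStep hr hne => exact (Clo_closed e _ hq).2.2 _ hne _ hr

end Syn

section Restrict

variable {A Q : Type}

theorem supports_restrict {M : PA A Q} {S : Set Q} {p r : {q // q ∈ S}}
    (h : Supports (M.restrict S) p r) : Supports M p.val r.val := by
  induction h with
  | refl q => exact Supports.refl _
  | trans h1 h2 ih1 ih2 => exact Supports.trans ih1 ih2
  | deltaStep h => exact Supports.deltaStep h
  | gammaStep h => exact Supports.gammaStep h
  | forkStep hr hne =>
      rcases hne with ⟨x, hx⟩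
      exact Supports.forkStep (Multiset.mem_map_of_mem _ hr) ⟨x.val, hx⟩

theorem restrict_forkAcyclic {M : PA A Q} {S : Set Q} (hM : ForkAcyclic M) :
    ForkAcyclic (M.restrict S) := by
  intro p φ r hr hne hsup
  rcases hne with ⟨x, hx⟩
  exact hM p.val (φ.map Subtype.val) r.val (Multiset.mem_map_of_mem _ hr) ⟨x.val, hx⟩
    (supports_restrict hsup)

theorem map_attach_eq {α β : Type*} (l : List α) (f : {x // x ∈ l} → β) (g : α → β)
    (h : ∀ (x : α) (hx : x ∈ l), f ⟨x, hx⟩ = g x) : l.attach.map f = l.map g := by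
  rw [← List.attach_map_val (l := l) (f := g)]
  apply List.map_congr_left
  rintro ⟨x, hx⟩ _
  exact h x hx

theorem run_of_restrict {M : PA A Q} {S : Set Q} {p : {q // q ∈ S}} {U : Pomset A}
    {p' : {q // q ∈ S}} (h : Run (M.restrict S) p U p') : Run M p.val U p'.val := by
  induction h with
  | triv q => exact Run.triv _
  | seqUnit h => exact Run.seqUnit h
  | comp h1 h2 ih1 ih2 => exact Run.comp ih1 ih2
  | @parUnit q q' l hγ hacc hruns ih =>
      have hlist : ((l.map fun x => (x.1.val, x.2.1, x.2.2.val)).map Prod.fst)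
          = (l.map Prod.fst).map Subtype.val := by
        simp [List.map_map]
      have hγ' : q'.val ∈ M.γ q.val
          (↑((l.map fun x => (x.1.val, x.2.1, x.2.2.val)).map Prod.fst) : Multiset Q) := by
        rw [hlist]
        exact hγ
      have := Run.parUnit (M := M) (l.map fun x => (x.1.val, x.2.1, x.2.2.val)) hγ'
        (by rintro x hx
            rcases List.mem_map.1 hx with ⟨y, hy, rfl⟩
            exact hacc y hy)
        (by rintro x hx
            rcases List.mem_map.1 hx with ⟨y, hy, rfl⟩
            exact ih y hy)
      simpa [List.map_map, Function.comp_def] using this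

theorem run_restrict {M : PA A Q} {S : Set Q} (hS : SupportClosed M S) :
    ∀ {q U q'}, Run M q U q' → ∀ (hq : q ∈ S) (hq' : q' ∈ S),
      Run (M.restrict S) ⟨q, hq⟩ U ⟨q', hq'⟩ := by
  intro q U q' h
  induction h with
  | triv q =>
      intro hq hq'
      exact Run.triv _
  | seqUnit h => intro hq hq'; exact Run.seqUnit h
  | @comp q U q'' V q' h1 h2 ih1 ih2 =>
      intro hq hq'
      have hmid : q'' ∈ S := hS _ hq _ (run_supports h1)
      exact Run.comp (ih1 hq hmid) (ih2 hmid hq')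
  | @parUnit q q' l hγ hacc hruns ih =>
      intro hq hq'
      have hm1 : ∀ x ∈ l, x.1 ∈ S := by
        intro x hx
        refine hS _ hq _ (Supports.forkStep ?_ ⟨q', hγ⟩)
        exact Multiset.mem_coe.2 (List.mem_map.2 ⟨x, hx, rfl⟩)
      have hm2 : ∀ x ∈ l, x.2.2 ∈ S := fun x hx =>
        hS _ (hm1 x hx) _ (run_supports (hruns x hx))
      have key1 : ((l.attach.map fun x =>
            ((⟨x.1.1, hm1 x.1 x.2⟩ : {y // y ∈ S}), x.1.2.1,
             (⟨x.1.2.2, hm2 x.1 x.2⟩ : {y // y ∈ S}))).map Prod.fst).map Subtype.val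
            = l.map Prod.fst := by
        rw [List.map_map, List.map_map]
        exact map_attach_eq l _ _ (fun x hx => rfl)
      have key2 : ((l.attach.map fun x =>
            ((⟨x.1.1, hm1 x.1 x.2⟩ : {y // y ∈ S}), x.1.2.1,
             (⟨x.1.2.2, hm2 x.1 x.2⟩ : {y // y ∈ S}))).map fun x => x.2.1)
            = l.map fun x => x.2.1 := by
        rw [List.map_map]
        exact map_attach_eq l _ _ (fun x hx => rfl)
      have hγ' : (⟨q', hq'⟩ : {x // x ∈ S}) ∈ (M.restrict S).γ ⟨q, hq⟩
          (↑((l.attach.map fun x =>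
            ((⟨x.1.1, hm1 x.1 x.2⟩ : {y // y ∈ S}), x.1.2.1,
             (⟨x.1.2.2, hm2 x.1 x.2⟩ : {y // y ∈ S}))).map Prod.fst) : Multiset _) := by
        show q' ∈ M.γ q (Multiset.map Subtype.val _)
        show q' ∈ M.γ q ((((l.attach.map fun x =>
            ((⟨x.1.1, hm1 x.1 x.2⟩ : {y // y ∈ S}), x.1.2.1,
             (⟨x.1.2.2, hm2 x.1 x.2⟩ : {y // y ∈ S}))).map Prod.fst).map Subtype.val : List Q) : Multiset Q)
        rw [key1]
        exact hγ
      have := Run.parUnit (M := M.restrict S) (q := ⟨q, hq⟩) (q' := ⟨q', hq'⟩)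
        (l.attach.map fun x =>
            ((⟨x.1.1, hm1 x.1 x.2⟩ : {y // y ∈ S}), x.1.2.1,
             (⟨x.1.2.2, hm2 x.1 x.2⟩ : {y // y ∈ S}))) hγ'
        (by rintro x hx
            rcases List.mem_map.1 hx with ⟨y, hy, rfl⟩
            exact hacc y.1 y.2)
        (by rintro x hx
            rcases List.mem_map.1 hx with ⟨y, hy, rfl⟩
            exact ih y.1 y.2 (hm1 y.1 y.2) (hm2 y.1 y.2))
      rwa [key2] at this

theorem restrict_lang {M : PA A Q} {S : Set Q} (hS : SupportClosed M S) {q : Q}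
    (hq : q ∈ S) : (M.restrict S).lang ⟨q, hq⟩ = M.lang q := by
  ext U
  constructor
  · rintro ⟨q', hq', hrun⟩
    exact ⟨q'.val, hq', run_of_restrict hrun⟩
  · rintro ⟨q', hq', hrun⟩
    have h' : q' ∈ S := hS q hq q' (run_supports hrun)
    exact ⟨⟨q', h'⟩, hq', run_restrict hS hrun hq h'⟩

theorem restrict_fork_finite {M : PA A Q} {S : Set Q}
    (h : ∀ q : Q, {φ : Multiset Q | (M.γ q φ).Nonempty}.Finite) (p : {q // q ∈ S}) :
    {φ : Multiset {q // q ∈ S} | ((M.restrict S).γ p φ).Nonempty}.Finite := by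
  have hinj : Function.Injective (Multiset.map (Subtype.val : {q // q ∈ S} → Q)) :=
    Multiset.map_injective Subtype.val_injective
  apply Set.Finite.subset (Set.Finite.preimage hinj.injOn (h p.val))
  rintro φ ⟨x, hx⟩
  exact ⟨x.val, hx⟩

theorem forward (e : SR A) :
    ∃ (Q : Type) (_ : Fintype Q) (M : PA A Q),
      ForkAcyclic M ∧
      (∀ q : Q, {φ : Multiset Q | (M.γ q φ).Nonempty}.Finite) ∧
      ∃ q : Q, sem e = M.lang q := by
  classical
  refine ⟨{q // q ∈ Clo e}, (Clo_finite e).fintype, (synPA A).restrict (Clo e),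
    restrict_forkAcyclic synPA_forkAcyclic, ?_, ⟨e, self_mem_Clo e⟩, ?_⟩
  · intro q
    exact restrict_fork_finite (M := synPA A)
      (fun g => (FSet_finite g).subset (fun φ hφ => gamma_mem_FSet hφ)) q
  · rw [sem_eq_synLang, restrict_lang (Clo_supportClosed e) (self_mem_Clo e)]

end Restrict

section MY

variable {A Q : Type}

/-- Paths in a transition system labelled by pomset languages, with
intermediate states restricted to `S`. -/
inductive Steps (LL : Q → Q → Set (Pomset A)) (S : Set Q) : Q → Pomset A → Q → Prop
  | nil (p) : Steps LL S p Pomset.eps p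
  | single {p p' : Q} {V : Pomset A} : V ∈ LL p p' → Steps LL S p V p'
  | cons {p r p' : Q} {V W : Pomset A} :
      V ∈ LL p r → r ∈ S → Steps LL S r W p' → Steps LL S p (V.seq W) p'

theorem steps_mono {LL : Q → Q → Set (Pomset A)} {S S' : Set Q} (hS : S ⊆ S')
    {p U p'} (h : Steps LL S p U p') : Steps LL S' p U p' := by
  induction h with
  | nil => exact Steps.nil _
  | single h => exact Steps.single h
  | cons h hr _ ih => exact Steps.cons h (hS hr) ih

theorem steps_append {LL : Q → Q → Set (Pomset A)} {S : Set Q} {p V r W p'}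
    (h1 : Steps LL S p V r) (hr : r ∈ S) (h2 : Steps LL S r W p') :
    Steps LL S p (V.seq W) p' := by
  induction h1 with
  | nil => rwa [Pomset.eps_seq]
  | single h => exact Steps.cons h hr h2
  | cons h hm _ ih =>
      rw [Pomset.seq_assoc]
      exact Steps.cons h hm (ih hr h2)

theorem steps_star_append {LL : Q → Q → Set (Pomset A)} {T : Set Q} {s p' : Q} :
    ∀ (n : ℕ) (W : Pomset A), W ∈ langPow {V | Steps LL T s V s} n →
    ∀ X, Steps LL (insert s T) s X p' → Steps LL (insert s T) s (W.seq X) p' := by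
  intro n
  induction n with
  | zero =>
      intro W hW X hX
      have : W = Pomset.eps := by simpa [langPow] using hW
      subst this
      rwa [Pomset.eps_seq]
  | succ n ih =>
      intro W hW X hX
      rcases mem_langSeq.1 hW with ⟨W1, hW1, W2, hW2, rfl⟩
      rw [Pomset.seq_assoc]
      exact steps_append (steps_mono (Set.subset_insert _ _) hW1) (Set.mem_insert _ _)
        (ih W2 hW2 X hX)

theorem steps_insert_iff {LL : Q → Q → Set (Pomset A)} {T : Set Q} {s : Q} {p : Q}
    {U : Pomset A} {p' : Q} :
    Steps LL (insert s T) p U p' ↔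
    Steps LL T p U p' ∨
    U ∈ langSeq {V | Steps LL T p V s}
        (langSeq (langStar {V | Steps LL T s V s}) {V | Steps LL T s V p'}) := by
  constructor
  · intro h
    induction h with
    | nil => exact Or.inl (Steps.nil _)
    | single h => exact Or.inl (Steps.single h)
    | @cons p r p' V W h hr htail ih =>
        rcases hr with rfl | hrT
        · rcases ih with hW | hW
          · refine Or.inr (seq_mem_langSeq (Steps.single h) ?_)
            exact mem_langSeq.2 ⟨Pomset.eps, eps_mem_langStar _, W, hW, Pomset.eps_seq W⟩
          · rcases mem_langSeq.1 hW with ⟨W1, hW1, X, hX, rfl⟩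
            rcases mem_langSeq.1 hX with ⟨W2, hW2, W3, hW3, rfl⟩
            refine Or.inr (mem_langSeq.2 ⟨V, Steps.single h, (W1.seq W2).seq W3,
              mem_langSeq.2 ⟨W1.seq W2, seq_mem_langStar hW1 hW2, W3, hW3, rfl⟩, ?_⟩)
            rw [Pomset.seq_assoc]
        · rcases ih with hW | hW
          · exact Or.inl (Steps.cons h hrT hW)
          · rcases mem_langSeq.1 hW with ⟨W1, hW1, X, hX, rfl⟩
            refine Or.inr (mem_langSeq.2 ⟨V.seq W1, Steps.cons h hrT hW1, X, hX, ?_⟩)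
            rw [Pomset.seq_assoc]
  · rintro (h | h)
    · exact steps_mono (Set.subset_insert _ _) h
    · rcases mem_langSeq.1 h with ⟨V, hV, X, hX, rfl⟩
      rcases mem_langSeq.1 hX with ⟨W, hW, Y, hY, rfl⟩
      rcases mem_langStar.1 hW with ⟨n, hn⟩
      exact steps_append (steps_mono (Set.subset_insert _ _) hV) (Set.mem_insert _ _)
        (steps_star_append n W hn Y (steps_mono (Set.subset_insert _ _) hY))

/-- The McNaughton-Yamada construction. -/
def ME [DecidableEq Q] (ℓ : Q → Q → SR A) : List Q → Q → Q → SR A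
  | [], p, p' => .plus (ℓ p p') (if p = p' then .one else .zero)
  | s :: S, p, p' => .plus (ME ℓ S p p')
      (.seq (ME ℓ S p s) (.seq (.star (ME ℓ S s s)) (ME ℓ S s p')))

theorem sem_ME [DecidableEq Q] {ℓ : Q → Q → SR A} {LL : Q → Q → Set (Pomset A)}
    (hL : ∀ p p', sem (ℓ p p') = LL p p') :
    ∀ (S : List Q) (p p' : Q),
      sem (ME ℓ S p p') = {U | Steps LL {x | x ∈ S} p U p'} := by
  intro S
  induction S with
  | nil =>
      intro p p'
      ext U
      show U ∈ sem (ℓ p p') ∪ sem (if p = p' then SR.one else SR.zero) ↔ _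
      constructor
      · rintro (hU | hU)
        · exact Steps.single ((hL p p') ▸ hU)
        · split at hU
          · next h =>
              subst h
              have : U = Pomset.eps := by simpa [sem] using hU
              subst this
              exact Steps.nil _
          · exact absurd hU (by simp [sem])
      · intro h
        cases h with
        | nil =>
            right
            simp [sem]
        | single h => exact Or.inl ((hL p p') ▸ h)
        | cons h hr _ => exact absurd hr (by simp)
  | cons s S ih =>
      intro p p'
      have hset : {x | x ∈ s :: S} = insert s {x | x ∈ S} := by
        ext x
        simp [List.mem_cons, Set.mem_insert_iff]
      show sem (ME ℓ S p p') ∪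
        langSeq (sem (ME ℓ S p s))
          (langSeq (langStar (sem (ME ℓ S s s))) (sem (ME ℓ S s p'))) = _
      rw [ih, ih, ih, ih, hset]
      ext U
      rw [Set.mem_setOf_eq, steps_insert_iff]
      rfl

end MY

section Backward

variable {A Q : Type}

theorem backward [Fintype A] [Fintype Q] {M : PA A Q}
    (hFA : ForkAcyclic M)
    (hfin : ∀ q : Q, {φ : Multiset Q | (M.γ q φ).Nonempty}.Finite) :
    ∀ q : Q, ∃ e : SR A, sem e = M.lang q := by
  classical
  have htrans : IsTrans Q (fun a b => Supports M a b ∧ ¬ Supports M b a) := by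
    constructor
    rintro a b c ⟨h1, h2⟩ ⟨h3, h4⟩
    exact ⟨Supports.trans h1 h3, fun h => h4 (Supports.trans h h1)⟩
  have hirr : IsIrrefl Q (fun a b => Supports M a b ∧ ¬ Supports M b a) := by
    constructor
    rintro a ⟨h1, h2⟩
    exact h2 h1
  have hwf : WellFounded (fun a b : Q => Supports M a b ∧ ¬ Supports M b a) :=
    Finite.wellFounded_of_trans_of_irrefl _
  intro q
  induction q using hwf.induction with
  | _ q IH =>
  choose E hE using IH
  -- the languages of "unit moves" available below `q`
  set LL : Q → Q → Set (Pomset A) := fun p p' =>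
    {U | (∃ a, p' ∈ M.δ p a ∧ U = Pomset.atom a) ∨
         (∃ φ : Multiset Q, p' ∈ M.γ p φ ∧
            (∀ r ∈ φ, Supports M r q ∧ ¬ Supports M q r) ∧
            U ∈ listParLang (φ.toList.map M.lang))} with hLLdef
  -- the letter expressions
  set ℓ : Q → Q → SR A := fun p p' =>
    SR.plus
      (sumSR ((Finset.univ.toList (α := A)).map fun a =>
        if p' ∈ M.δ p a then SR.atom a else SR.zero))
      (sumSR ((hfin p).toFinset.toList.map fun φ =>
        if h : p' ∈ M.γ p φ ∧ ∀ r ∈ φ.toList, Supports M r q ∧ ¬ Supports M q r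
        then parSR (φ.toList.attach.map fun x => E x.1 (h.2 x.1 x.2))
        else SR.zero)) with hldef
  have hLL : ∀ p p', sem (ℓ p p') = LL p p' := by
    intro p p'
    ext U
    show U ∈ sem (sumSR _) ∪ sem (sumSR _) ↔ _
    rw [sem_sumSR, sem_sumSR]
    constructor
    · rintro (hU | hU)
      · rcases Set.mem_iUnion₂.1 hU with ⟨g, hg, hUg⟩
        rcases List.mem_map.1 hg with ⟨a, _, rfl⟩
        by_cases h : p' ∈ M.δ p a
        · rw [if_pos h] at hUg
          exact Or.inl ⟨a, h, by simpa [sem] using hUg⟩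
        · rw [if_neg h] at hUg
          exact absurd hUg (by simp [sem])
      · rcases Set.mem_iUnion₂.1 hU with ⟨g, hg, hUg⟩
        rcases List.mem_map.1 hg with ⟨φ, _, rfl⟩
        by_cases h : p' ∈ M.γ p φ ∧ ∀ r ∈ φ.toList, Supports M r q ∧ ¬ Supports M q r
        · rw [dif_pos h] at hUg
          refine Or.inr ⟨φ, h.1, fun r hr => h.2 r (Multiset.mem_toList.2 hr), ?_⟩
          rw [sem_parSR] at hUg
          have hmap : (φ.toList.attach.map fun x => E x.1 (h.2 x.1 x.2)).map sem
              = φ.toList.map M.lang := by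
            rw [List.map_map]
            exact map_attach_eq _ _ _ (fun x hx => hE _ _)
          rwa [hmap] at hUg
        · rw [dif_neg h] at hUg
          exact absurd hUg (by simp [sem])
    · rintro (⟨a, ha, rfl⟩ | ⟨φ, hγ, hstrict, hU⟩)
      · refine Or.inl (Set.mem_iUnion₂.2 ⟨SR.atom a, ?_, by simp [sem]⟩)
        refine List.mem_map.2 ⟨a, Finset.mem_toList.2 (Finset.mem_univ a), ?_⟩
        rw [if_pos ha]
      · have h : p' ∈ M.γ p φ ∧ ∀ r ∈ φ.toList, Supports M r q ∧ ¬ Supports M q r :=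
          ⟨hγ, fun r hr => hstrict r (Multiset.mem_toList.1 hr)⟩
        refine Or.inr (Set.mem_iUnion₂.2 ⟨_, List.mem_map.2
          ⟨φ, Finset.mem_toList.2 ((hfin p).mem_toFinset.2 ⟨p', hγ⟩), rfl⟩, ?_⟩)
        rw [dif_pos h, sem_parSR]
        have hmap : (φ.toList.attach.map fun x => E x.1 (h.2 x.1 x.2)).map sem
            = φ.toList.map M.lang := by
          rw [List.map_map]
          exact map_attach_eq _ _ _ (fun x hx => hE _ _)
        rwa [hmap]
  have unit_sound : ∀ p p' U, U ∈ LL p p' → Run M p U p' := by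
    rintro p p' U (⟨a, ha, rfl⟩ | ⟨φ, hγ, hstrict, hU⟩)
    · exact Run.seqUnit ha
    · rcases exists_of_mem_listParLang M.lang φ.toList hU with ⟨lp, h1, h2, rfl⟩
      have hl1 : (lp.attach.map fun x =>
          (x.1.1, x.1.2, Classical.choose (h2 x.1 x.2))).map Prod.fst
          = lp.map Prod.fst := by
        rw [List.map_map]
        exact map_attach_eq _ _ _ (fun x hx => rfl)
      have hl2 : ((lp.attach.map fun x =>
          (x.1.1, x.1.2, Classical.choose (h2 x.1 x.2))).map fun x => x.2.1)
          = lp.map Prod.snd := by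
        rw [List.map_map]
        exact map_attach_eq _ _ _ (fun x hx => rfl)
      have hγ' : p' ∈ M.γ p (↑((lp.attach.map fun x =>
          (x.1.1, x.1.2, Classical.choose (h2 x.1 x.2))).map Prod.fst) : Multiset Q) := by
        rw [hl1, h1, Multiset.coe_toList]
        exact hγ
      have := Run.parUnit (M := M) (q := p) (q' := p')
        (lp.attach.map fun x => (x.1.1, x.1.2, Classical.choose (h2 x.1 x.2))) hγ'
        (by rintro x hx
            rcases List.mem_map.1 hx with ⟨y, hy, rfl⟩
            exact (Classical.choose_spec (h2 y.1 y.2)).1)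
        (by rintro x hx
            rcases List.mem_map.1 hx with ⟨y, hy, rfl⟩
            exact (Classical.choose_spec (h2 y.1 y.2)).2)
      rwa [hl2] at this
  have steps_sound : ∀ p U p', Steps LL Set.univ p U p' → Run M p U p' := by
    intro p U p' h
    induction h with
    | nil => exact Run.triv _
    | single h => exact unit_sound _ _ _ h
    | cons h _ _ ih => exact Run.comp (unit_sound _ _ _ h) ih
  have run_to_steps : ∀ p U p', Run M p U p' → Supports M p q →
      Steps LL Set.univ p U p' := by
    intro p U p' h
    induction h with
    | triv r => intro _; exact Steps.nil _
    | seqUnit h => intro _; exact Steps.single (Or.inl ⟨_, h, rfl⟩)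
    | @comp p1 U1 r V1 p1' h1 h2 ih1 ih2 =>
        intro hp
        exact steps_append (ih1 hp) (Set.mem_univ _)
          (ih2 (Supports.trans (run_supports h1) hp))
    | @parUnit p1 p1' l hγ hacc hruns ih =>
        intro hp
        refine Steps.single (Or.inr ⟨↑(l.map Prod.fst), hγ, ?_, ?_⟩)
        · intro r hr
          have hrp : Supports M r p1 := Supports.forkStep hr ⟨p1', hγ⟩
          refine ⟨Supports.trans hrp hp, fun hqr => ?_⟩
          exact hFA p1 _ r hr ⟨p1', hγ⟩ (Supports.trans hp hqr)
        · have hmem : ∀ x ∈ l.map (fun x => (x.1, x.2.1)), x.2 ∈ M.lang x.1 := by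
            rintro x hx
            rcases List.mem_map.1 hx with ⟨y, hy, rfl⟩
            exact ⟨y.2.2, hacc y hy, hruns y hy⟩
          have hP := parProd_mem_listParLang M.lang (l.map fun x => (x.1, x.2.1)) hmem
          have hperm : ((↑(l.map Prod.fst) : Multiset Q)).toList.Perm (l.map Prod.fst) := by
            rw [← Multiset.coe_eq_coe, Multiset.coe_toList]
          rw [listParLang_perm (hperm.map M.lang)]
          simpa [List.map_map, Function.comp_def] using hP
  refine ⟨sumSR (Finset.univ.toList.map fun p' =>
    if p' ∈ M.acc then ME ℓ Finset.univ.toList q p' else SR.zero), ?_⟩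
  have huniv : {x : Q | x ∈ (Finset.univ.toList : List Q)} = Set.univ := by
    ext x
    simp
  rw [sem_sumSR]
  ext U
  constructor
  · intro hU
    rcases Set.mem_iUnion₂.1 hU with ⟨g, hg, hUg⟩
    rcases List.mem_map.1 hg with ⟨p', _, rfl⟩
    by_cases h : p' ∈ M.acc
    · rw [if_pos h] at hUg
      rw [sem_ME hLL, huniv] at hUg
      exact ⟨p', h, steps_sound _ _ _ hUg⟩
    · rw [if_neg h] at hUg
      exact absurd hUg (by simp [sem])
  · rintro ⟨p', hacc, hrun⟩
    refine Set.mem_iUnion₂.2 ⟨_, List.mem_map.2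
      ⟨p', Finset.mem_toList.2 (Finset.mem_univ p'), rfl⟩, ?_⟩
    rw [if_pos hacc, sem_ME hLL, huniv]
    exact run_to_steps _ _ _ hrun (Supports.refl q)

end Backward

end Aux

/-- Kleene theorem for weak bi-Kleene algebra: a pomset language is
series-rational iff it is accepted by a state of a finite, fork-acyclic pomset
automaton. -/
theorem kleene_theorem {A : Type} [Fintype A] (L : Set (Pomset A)) :
    (∃ e : SR A, L = sem e) ↔
    ∃ (Q : Type) (_ : Fintype Q) (M : PA A Q),
      ForkAcyclic M ∧
      (∀ q : Q, {φ : Multiset Q | (M.γ q φ).Nonempty}.Finite) ∧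
      ∃ q : Q, L = M.lang q := by
  constructor
  · rintro ⟨e, rfl⟩
    exact forward e
  · rintro ⟨Q, hQ, M, hFA, hfin, q, rfl⟩
    haveI := hQ
    obtain ⟨e, he⟩ := backward hFA hfin q
    exact ⟨e, he.symm⟩

end WBKA
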